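/- Let τ be a Salem number and let n ≥ 1 be a natural number. Then τⁿ is a Salem number. -/

import Mathlib

set_option synthInstance.maxHeartbeats 1000000
set_option maxHeartbeats 1000000


/-- A Salem number: a real algebraic integer `τ > 1` such that every complex root of its
minimal polynomial over `ℚ` other than `τ` itself has absolute value at most `1`, and at
least one such root has absolute value exactly `1`. -/
def IsSalem (τ : ℝ) : Prop :=
  1 < τ ∧ IsIntegral ℤ τ ∧
    (∀ z : ℂ, Polynomial.aeval z (minpoly ℚ τ) = 0 → z ≠ (τ : ℂ) → ‖z‖ ≤ 1) ∧
    (∃ z : ℂ, Polynomial.aeval z (minpoly ℚ τ) = 0 ∧ z ≠ (τ : ℂ) ∧ ‖z‖ = 1)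

open Polynomial

/-- The n-th power of the generic root of `minpoly ℚ x` is a root of `minpoly ℚ (x^n)`. -/
lemma salem_aux_root (x : ℂ) (hx : IsIntegral ℚ x) (n : ℕ) :
    aeval ((AdjoinRoot.root (minpoly ℚ x)) ^ n) (minpoly ℚ (x ^ n)) = 0 := by
  haveI : Fact (Irreducible (minpoly ℚ x)) := ⟨minpoly.irreducible hx⟩
  let θ : AdjoinRoot (minpoly ℚ x) →ₐ[ℚ] ℂ :=
    AdjoinRoot.liftAlgHom (minpoly ℚ x) (Algebra.ofId ℚ ℂ) x (minpoly.aeval ℚ x)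
  have hinj : Function.Injective θ := θ.toRingHom.injective
  apply hinj
  erw [map_zero, ← Polynomial.aeval_algHom_apply, map_pow, AdjoinRoot.liftAlgHom_root]
  exact minpoly.aeval ℚ (x ^ n)

/-- If `w` is a conjugate of `x`, then `w^n` is a root of `minpoly ℚ (x^n)`. -/
lemma salem_aux_forward (x : ℂ) (hx : IsIntegral ℚ x) (n : ℕ) (w : ℂ)
    (hw : aeval w (minpoly ℚ x) = 0) : aeval (w ^ n) (minpoly ℚ (x ^ n)) = 0 := by
  haveI : Fact (Irreducible (minpoly ℚ x)) := ⟨minpoly.irreducible hx⟩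
  let θ : AdjoinRoot (minpoly ℚ x) →ₐ[ℚ] ℂ := AdjoinRoot.liftAlgHom (minpoly ℚ x) (Algebra.ofId ℚ ℂ) w hw
  have h := salem_aux_root x hx n
  have h2 := Polynomial.aeval_algHom_apply θ ((AdjoinRoot.root (minpoly ℚ x)) ^ n)
    (minpoly ℚ (x ^ n))
  erw [h, map_zero, map_pow, AdjoinRoot.liftAlgHom_root] at h2
  exact h2

/-- Every root of `minpoly ℚ (x^n)` is the n-th power of a conjugate of `x`. -/
lemma salem_aux_backward (x : ℂ) (hx : IsIntegral ℚ x) (n : ℕ) (z : ℂ)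
    (hz : aeval z (minpoly ℚ (x ^ n)) = 0) :
    ∃ w : ℂ, aeval w (minpoly ℚ x) = 0 ∧ w ^ n = z := by
  set g := minpoly ℚ x with hgdef
  set f := minpoly ℚ (x ^ n) with hfdef
  haveI : Fact (Irreducible g) := ⟨minpoly.irreducible hx⟩
  haveI : Fact (Irreducible f) := ⟨minpoly.irreducible (hx.pow n)⟩
  have hroot : aeval ((AdjoinRoot.root g) ^ n) f = 0 := salem_aux_root x hx n
  let j : AdjoinRoot f →ₐ[ℚ] AdjoinRoot g := AdjoinRoot.liftAlgHom f (Algebra.ofId ℚ (AdjoinRoot g)) ((AdjoinRoot.root g) ^ n) hroot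
  let ε : AdjoinRoot f →ₐ[ℚ] ℂ := AdjoinRoot.liftAlgHom f (Algebra.ofId ℚ ℂ) z hz
  have hj0 : j (AdjoinRoot.root f) = (AdjoinRoot.root g) ^ n := AdjoinRoot.liftAlgHom_root _ _ _ hroot
  have hε0 : ε (AdjoinRoot.root f) = z := AdjoinRoot.liftAlgHom_root _ _ _ hz
  letI : Algebra (AdjoinRoot f) (AdjoinRoot g) := j.toRingHom.toAlgebra
  letI : Algebra (AdjoinRoot f) ℂ := ε.toRingHom.toAlgebra
  haveI : IsScalarTower ℚ (AdjoinRoot f) (AdjoinRoot g) :=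
    IsScalarTower.of_algebraMap_eq fun q => (j.commutes q).symm
  haveI : Module.IsTorsionFree (AdjoinRoot f) ℂ :=
    Module.isTorsionFree_iff_algebraMap_injective.mpr ε.toRingHom.injective
  haveI : Module.IsTorsionFree (AdjoinRoot f) (AdjoinRoot g) :=
    Module.isTorsionFree_iff_algebraMap_injective.mpr j.toRingHom.injective
  haveI : IsScalarTower ℚ (AdjoinRoot f) ℂ :=
    IsScalarTower.of_algebraMap_eq fun q => (ε.commutes q).symm
  haveI : FiniteDimensional ℚ (AdjoinRoot g) :=
    (AdjoinRoot.powerBasis (minpoly.ne_zero hx)).finite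
  haveI : Algebra.IsAlgebraic ℚ (AdjoinRoot g) := Algebra.IsAlgebraic.of_finite ℚ _
  haveI : Algebra.IsAlgebraic (AdjoinRoot f) (AdjoinRoot g) :=
    Algebra.IsAlgebraic.tower_top (K := ℚ) (AdjoinRoot f)
  let ψ : AdjoinRoot g →ₐ[AdjoinRoot f] ℂ := IsAlgClosed.lift
  refine ⟨ψ (AdjoinRoot.root g), ?_, ?_⟩
  · have h2 := Polynomial.aeval_algHom_apply (ψ.restrictScalars ℚ) (AdjoinRoot.root g) g
    erw [AdjoinRoot.aeval_eq, AdjoinRoot.mk_self, map_zero] at h2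
    exact h2
  · have hcomm : ψ (algebraMap (AdjoinRoot f) (AdjoinRoot g) (AdjoinRoot.root f)) =
        algebraMap (AdjoinRoot f) ℂ (AdjoinRoot.root f) := ψ.commutes _
    have hj : algebraMap (AdjoinRoot f) (AdjoinRoot g) (AdjoinRoot.root f) =
        (AdjoinRoot.root g) ^ n := hj0
    have hε : algebraMap (AdjoinRoot f) ℂ (AdjoinRoot.root f) = z := hε0
    rw [hj, hε, map_pow] at hcomm
    exact hcomm

/-- A positive power of a Salem number is a Salem number. -/
theorem salem_pow (τ : ℝ) (hτ : IsSalem τ) (n : ℕ) (hn : 1 ≤ n) :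
    IsSalem (τ ^ n) := by
  obtain ⟨hτ1, hτint, hbound, w0, hw0root, hw0ne, hw0abs⟩ := hτ
  have hτQ : IsIntegral ℚ τ := hτint.tower_top
  have hxQ : IsIntegral ℚ (τ : ℂ) := hτQ.map (IsScalarTower.toAlgHom ℚ ℝ ℂ)
  -- minpoly over ℚ of τ (real) equals that of its complex image
  have hming : minpoly ℚ ((τ : ℝ) : ℂ) = minpoly ℚ τ :=
    minpoly.algebraMap_eq (algebraMap ℝ ℂ).injective τ
  have hminf : minpoly ℚ (((τ ^ n : ℝ)) : ℂ) = minpoly ℚ (τ ^ n : ℝ) :=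
    minpoly.algebraMap_eq (algebraMap ℝ ℂ).injective (τ ^ n)
  have hcast : (((τ ^ n : ℝ)) : ℂ) = (τ : ℂ) ^ n := by push_cast; ring
  have hminf' : minpoly ℚ (τ ^ n : ℝ) = minpoly ℚ ((τ : ℂ) ^ n) := by
    rw [← hminf, hcast]
  have hτpos : (1 : ℝ) < τ ^ n := one_lt_pow₀ hτ1 (by omega)
  refine ⟨hτpos, hτint.pow n, ?_, ?_⟩
  · intro z hz hzne
    rw [hminf'] at hz
    obtain ⟨w, hwroot, hwpow⟩ := salem_aux_backward (τ : ℂ) hxQ n z hz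
    have hwne : w ≠ (τ : ℂ) := by
      rintro rfl
      exact hzne (by rw [← hwpow, hcast])
    have hwabs : ‖w‖ ≤ 1 := by
      apply hbound w _ hwne
      rwa [hming] at hwroot
    calc ‖z‖ = ‖w‖ ^ n := by rw [← hwpow, norm_pow]
    _ ≤ 1 := pow_le_one₀ (norm_nonneg w) hwabs
  · refine ⟨w0 ^ n, ?_, ?_, ?_⟩
    · rw [hminf']
      exact salem_aux_forward (τ : ℂ) hxQ n w0 (by rwa [hming])
    · intro h
      have habs : ‖w0 ^ n‖ = 1 := by rw [norm_pow, hw0abs, one_pow]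
      rw [h, Complex.norm_real, Real.norm_eq_abs] at habs
      rw [abs_of_pos (lt_trans one_pos hτpos)] at habs
      linarith
    · rw [norm_pow, hw0abs, one_pow]
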